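/- arXiv:2402.03475 — 3 statements merged into one kernel-verified Lean document; each statement's English description precedes it below -/
import Mathlib

section
/- Let (a_n)_{n≥1} be nonnegative real numbers, N(x) = ∑_{n < x} a_n, N_0 = N and N_{k+1}(x) = ∫_0^x N_k(u) du. Then for every k ≥ 1, every y > 0 and every X ∈ ℝ, y^{-k}·Δ_y^{(k)} N_k(X − ky) ≤ N(X) ≤ y^{-k}·Δ_y^{(k)} N_k(X). -/
noncomputable section

/-- The forward difference operator `Δ_y f (x) = f(x + y) - f(x)`. -/
def fwdDiffR (y : ℝ) (f : ℝ → ℝ) : ℝ → ℝ := fun x => f (x + y) - f x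

/-- The summatory function `N(x) = ∑_{n < x} a_n` (with `N(x) = 0` for `x ≤ 1`). -/
noncomputable def partialSumR (a : ℕ → ℝ) (x : ℝ) : ℝ := ∑ n ∈ Finset.Ico 1 ⌈x⌉₊, a n

/-- Iterated integrals `N_0 = f`, `N_{k+1}(x) = ∫_0^x N_k(u) du`. -/
noncomputable def iterIntR (f : ℝ → ℝ) : ℕ → ℝ → ℝ
  | 0 => f
  | k + 1 => fun x => ∫ u in (0:ℝ)..x, iterIntR f k u

open intervalIntegral MeasureTheory

lemma fwdDiffR_iterate_succ' (y : ℝ) (f : ℝ → ℝ) (k : ℕ) (x : ℝ) :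
    (fwdDiffR y)^[k+1] f x = (fwdDiffR y)^[k] f (x + y) - (fwdDiffR y)^[k] f x := by
  rw [Function.iterate_succ_apply']; rfl

/-- `Δ_y` preserves interval-integrability on all intervals. -/
lemma locInt_fwdDiff {g : ℝ → ℝ} (y : ℝ)
    (hg : ∀ a b : ℝ, IntervalIntegrable g volume a b) :
    ∀ a b : ℝ, IntervalIntegrable (fwdDiffR y g) volume a b := by
  intro a b
  have h1 : IntervalIntegrable (fun x => g (x + y)) volume ((a + y) - y) ((b + y) - y) :=
    (hg (a + y) (b + y)).comp_add_right y
  simp only [add_sub_cancel_right] at h1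
  exact h1.sub (hg a b)

lemma locInt_fwdDiff_iterate {g : ℝ → ℝ} (y : ℝ)
    (hg : ∀ a b : ℝ, IntervalIntegrable g volume a b) (k : ℕ) :
    ∀ a b : ℝ, IntervalIntegrable ((fwdDiffR y)^[k] g) volume a b := by
  induction k with
  | zero => exact hg
  | succ n ih =>
      intro a b
      rw [Function.iterate_succ_apply']
      exact locInt_fwdDiff y ih a b

/-- Key computation: iterated differences of an antiderivative. -/
lemma L2 {g : ℝ → ℝ} {y : ℝ}
    (hg : ∀ a b : ℝ, IntervalIntegrable g volume a b) (k : ℕ) (x : ℝ) :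
    (fwdDiffR y)^[k] (fun t => ∫ u in (0:ℝ)..t, g u) x
      = (∫ u in (0:ℝ)..x, (fwdDiffR y)^[k] g u)
        + (fwdDiffR y)^[k] (fun t => ∫ u in (0:ℝ)..t, g u) 0 := by
  induction k generalizing x with
  | zero => simp
  | succ n ih =>
      have hG := locInt_fwdDiff_iterate y hg n
      set G : ℝ → ℝ := (fwdDiffR y)^[n] g with hGdef
      have htrans : ∀ a b : ℝ, IntervalIntegrable (fun u => G (u + y)) volume a b := by
        intro a b
        have h1 : IntervalIntegrable (fun u => G (u + y)) volume ((a+y)-y) ((b+y)-y) :=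
          (hG (a+y) (b+y)).comp_add_right y
        simpa using h1
      have key : ∀ z : ℝ, (fwdDiffR y)^[n+1] (fun t => ∫ u in (0:ℝ)..t, g u) z
          = (∫ u in (0:ℝ)..(z+y), G u) - ∫ u in (0:ℝ)..z, G u := by
        intro z
        rw [fwdDiffR_iterate_succ', ih (z+y), ih z]
        ring
      rw [key x, key 0]
      have hItSucc : ∀ u : ℝ, (fwdDiffR y)^[n+1] g u = G (u + y) - G u := by
        intro u; rw [fwdDiffR_iterate_succ']
      have hsub : (∫ u in (0:ℝ)..x, (fwdDiffR y)^[n+1] g u)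
          = (∫ u in (0:ℝ)..x, G (u + y)) - ∫ u in (0:ℝ)..x, G u := by
        rw [← intervalIntegral.integral_sub (htrans 0 x) (hG 0 x)]
        exact intervalIntegral.integral_congr fun u _ => hItSucc u
      have hshift : (∫ u in (0:ℝ)..x, G (u + y)) = ∫ u in y..(x+y), G u := by
        simpa using intervalIntegral.integral_comp_add_right (a := (0:ℝ)) (b := x) G y
      have hadj : (∫ u in (0:ℝ)..y, G u) + (∫ u in y..(x+y), G u)
          = ∫ u in (0:ℝ)..(x+y), G u :=
        intervalIntegral.integral_add_adjacent_intervals (hG 0 y) (hG y (x+y))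
      rw [hsub, hshift]
      simp only [zero_add, intervalIntegral.integral_same, sub_zero]
      linarith

/-- Main estimate by induction on `k`. -/
lemma keyBound {h : ℝ → ℝ} (hm : Monotone h) (h0 : ∀ x : ℝ, x ≤ 0 → h x = 0)
    {y : ℝ} (hy : 0 < y) :
    ∀ k : ℕ, (∀ a b : ℝ, IntervalIntegrable (iterIntR h k) volume a b) ∧
      ∀ x : ℝ, y ^ k * h x ≤ (fwdDiffR y)^[k] (iterIntR h k) x ∧
        (fwdDiffR y)^[k] (iterIntR h k) x ≤ y ^ k * h (x + k * y) := by
  intro k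
  induction k with
  | zero =>
      refine ⟨fun a b => hm.intervalIntegrable, fun x => ?_⟩
      simp [iterIntR]
  | succ n ih =>
      obtain ⟨hint, hbd⟩ := ih
      -- the (n+1)-st iterated integral is continuous, hence interval integrable
      have hcont : Continuous (iterIntR h (n+1)) := by
        show Continuous fun x => ∫ u in (0:ℝ)..x, iterIntR h n u
        exact intervalIntegral.continuous_primitive hint 0
      refine ⟨fun a b => hcont.intervalIntegrable a b, fun x => ?_⟩
      have hGint := locInt_fwdDiff_iterate y hint n
      set G : ℝ → ℝ := (fwdDiffR y)^[n] (iterIntR h n) with hGdef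
      -- G_{n+1} x = ∫ x..x+y, G
      have hrep : (fwdDiffR y)^[n+1] (iterIntR h (n+1)) x = ∫ u in x..(x+y), G u := by
        have e : iterIntR h (n+1) = fun t => ∫ u in (0:ℝ)..t, iterIntR h n u := rfl
        rw [e, fwdDiffR_iterate_succ', L2 hint n (x+y), L2 hint n x]
        have hadj : (∫ u in (0:ℝ)..x, G u) + (∫ u in x..(x+y), G u)
            = ∫ u in (0:ℝ)..(x+y), G u :=
          intervalIntegral.integral_add_adjacent_intervals (hGint 0 x) (hGint x (x+y))
        simp only [← hGdef]
        linarith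
      have hxy : x ≤ x + y := by linarith
      have hyk : (0:ℝ) ≤ y ^ n := le_of_lt (pow_pos hy n)
      constructor
      · -- lower bound
        have hlow : ∀ u ∈ Set.Icc x (x+y), y ^ n * h x ≤ G u := by
          intro u hu
          calc y ^ n * h x ≤ y ^ n * h u :=
                mul_le_mul_of_nonneg_left (hm hu.1) hyk
            _ ≤ G u := (hbd u).1
        have hmono := intervalIntegral.integral_mono_on (μ := volume) hxy
          (intervalIntegrable_const) (hGint x (x+y)) hlow
        rw [intervalIntegral.integral_const] at hmono
        rw [hrep]
        have : (x + y - x) • (y ^ n * h x) = y ^ (n+1) * h x := by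
          simp [smul_eq_mul]; ring
        linarith [hmono, this ▸ hmono]
      · -- upper bound
        have hup : ∀ u ∈ Set.Icc x (x+y), G u ≤ y ^ n * h (x + (↑(n+1)) * y) := by
          intro u hu
          calc G u ≤ y ^ n * h (u + n * y) := (hbd u).2
            _ ≤ y ^ n * h (x + (↑(n+1)) * y) := by
                apply mul_le_mul_of_nonneg_left _ hyk
                apply hm
                push_cast
                linarith [hu.2]
        have hmono := intervalIntegral.integral_mono_on (μ := volume) hxy
          (hGint x (x+y)) (intervalIntegrable_const) hup
        rw [intervalIntegral.integral_const] at hmono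
        rw [hrep]
        have : (x + y - x) • (y ^ n * h (x + (↑(n+1)) * y)) = y ^ (n+1) * h (x + (↑(n+1)) * y) := by
          simp [smul_eq_mul]; ring
        linarith [this ▸ hmono]

theorem statement11 (a : ℕ → ℝ) (ha : ∀ n, 0 ≤ a n) (k : ℕ) (hk : 1 ≤ k)
    (y : ℝ) (hy : 0 < y) (X : ℝ) :
    (y ^ k)⁻¹ * (fwdDiffR y)^[k] (iterIntR (partialSumR a) k) (X - k * y) ≤ partialSumR a X ∧
    partialSumR a X ≤ (y ^ k)⁻¹ * (fwdDiffR y)^[k] (iterIntR (partialSumR a) k) X := by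
  have hm : Monotone (partialSumR a) := by
    intro x₁ x₂ hle
    apply Finset.sum_le_sum_of_subset_of_nonneg
    · exact Finset.Ico_subset_Ico le_rfl (Nat.ceil_le_ceil hle)
    · intro n _ _; exact ha n
  have h0 : ∀ x : ℝ, x ≤ 0 → partialSumR a x = 0 := by
    intro x hx
    have : ⌈x⌉₊ = 0 := Nat.ceil_eq_zero.mpr hx
    simp [partialSumR, this]
  obtain ⟨_, hbd⟩ := keyBound hm h0 hy k
  have hpos : (0:ℝ) < y ^ k := pow_pos hy k
  constructor
  · have h1 := (hbd (X - k * y)).2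
    have e : X - ↑k * y + ↑k * y = X := by ring
    rw [e] at h1
    rw [inv_mul_eq_div, div_le_iff₀ hpos]
    linarith
  · have h1 := (hbd X).1
    rw [inv_mul_eq_div, le_div_iff₀ hpos]
    linarith

end
end

section
/- Let (a_n)_{n≥1} be complex numbers and (â_n)_{n≥1} real numbers with |a_n| ≤ â_n for all n. Let N(x) = ∑_{n < x} a_n and N̂(x) = ∑_{n < x} â_n, with iterated integrals N_k and N̂_k defined by N_0 = N, N_{k+1}(x) = ∫_0^x N_k(u) du (and likewise for N̂). Then for every k ≥ 1, every y > 0 and every X ∈ ℝ, |y^{-k}·Δ_y^{(k)} N_k(X) − N(X)| ≤ y^{-k}·Δ_y^{(k)} N̂_k(X) − N̂(X). -/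
noncomputable section

/-- The forward difference operator `Δ_y f (x) = f(x + y) - f(x)` (complex-valued). -/
def fwdDiffC (y : ℝ) (f : ℝ → ℂ) : ℝ → ℂ := fun x => f (x + y) - f x

/-- The summatory function `N(x) = ∑_{n < x} a_n` (complex coefficients). -/
noncomputable def partialSumC (a : ℕ → ℂ) (x : ℝ) : ℂ := ∑ n ∈ Finset.Ico 1 ⌈x⌉₊, a n

/-- Iterated integrals `N_0 = f`, `N_{k+1}(x) = ∫_0^x N_k(u) du` (complex-valued). -/
noncomputable def iterIntC (f : ℝ → ℂ) : ℕ → ℝ → ℂ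
  | 0 => f
  | k + 1 => fun x => ∫ u in (0:ℝ)..x, iterIntC f k u

namespace Stmt12

open MeasureTheory intervalIntegral

variable {E : Type*} [NormedAddCommGroup E] [NormedSpace ℝ E]

/-- generic forward difference -/
def fwdD (y : ℝ) (f : ℝ → E) : ℝ → E := fun x => f (x + y) - f x

/-- generic iterated integral -/
noncomputable def itI (f : ℝ → E) : ℕ → ℝ → E
  | 0 => f
  | k + 1 => fun x => ∫ u in (0:ℝ)..x, itI f k u

lemma fwdDiffR_eq : fwdDiffR = (fwdD (E := ℝ)) := rfl
lemma fwdDiffC_eq : fwdDiffC = (fwdD (E := ℂ)) := rfl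

lemma iterIntR_eq (f : ℝ → ℝ) (k : ℕ) : iterIntR f k = itI f k := by
  induction k with
  | zero => rfl
  | succ k ih => funext x; simp only [iterIntR, itI, ih]

lemma iterIntC_eq (f : ℝ → ℂ) (k : ℕ) : iterIntC f k = itI f k := by
  induction k with
  | zero => rfl
  | succ k ih => funext x; simp only [iterIntC, itI, ih]

/-- locally interval integrable everywhere -/
def LII (f : ℝ → E) : Prop := ∀ a b : ℝ, IntervalIntegrable f volume a b

lemma LII.comp_add_right {f : ℝ → E} (h : LII f) (c : ℝ) : LII (fun x => f (x + c)) := by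
  intro a b
  simpa using (h (a + c) (b + c)).comp_add_right c

lemma LII.comp_add_left {f : ℝ → E} (h : LII f) (c : ℝ) : LII (fun x => f (c + x)) := by
  intro a b
  simpa using (h (c + a) (c + b)).comp_add_left c

lemma LII.fwdDiff {f : ℝ → E} (h : LII f) (y : ℝ) : LII (fwdD y f) := by
  intro a b
  exact (h.comp_add_right y a b).sub (h a b)

lemma LII.fwdDiff_iter {f : ℝ → E} (h : LII f) (y : ℝ) (k : ℕ) : LII ((fwdD y)^[k] f) := by
  induction k with
  | zero => simpa using h
  | succ k ih =>
    rw [Function.iterate_succ']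
    exact ih.fwdDiff y

lemma LII.iter {f : ℝ → E} (h : LII f) (k : ℕ) : LII (itI f k) := by
  induction k with
  | zero => exact h
  | succ k ih =>
    intro a b
    exact (intervalIntegral.continuous_primitive ih 0).intervalIntegrable a b

lemma fwdD_itI_succ {f : ℝ → E} (h : LII f) (y : ℝ) (k : ℕ) (x : ℝ) :
    fwdD y (itI f (k + 1)) x = ∫ t in (0:ℝ)..y, itI f k (x + t) := by
  have h1 : (∫ t in (0:ℝ)..y, itI f k (x + t)) = ∫ u in (x + 0)..(x + y), itI f k u :=
    intervalIntegral.integral_comp_add_left (itI f k) x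
  rw [add_zero] at h1
  have h2 : (∫ u in (0:ℝ)..x, itI f k u) + (∫ u in x..(x + y), itI f k u)
      = ∫ u in (0:ℝ)..(x + y), itI f k u :=
    intervalIntegral.integral_add_adjacent_intervals (h.iter k 0 x) (h.iter k x (x + y))
  simp only [fwdD, itI]
  rw [h1, ← h2]
  abel

lemma fwdD_integral {g : ℝ → E} (h : LII g) (y : ℝ) (X : ℝ) :
    fwdD y (fun x => ∫ t in (0:ℝ)..y, g (x + t)) X = ∫ t in (0:ℝ)..y, fwdD y g (X + t) := by
  have e : (fun t : ℝ => g (X + t + y)) = fun t : ℝ => g ((X + y) + t) := by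
    funext t; congr 1; ring
  have hint1 : IntervalIntegrable (fun t => g (X + t + y)) volume 0 y := by
    rw [e]; exact h.comp_add_left (X + y) 0 y
  have hint2 : IntervalIntegrable (fun t => g (X + t)) volume 0 y := h.comp_add_left X 0 y
  have h3 : (∫ t in (0:ℝ)..y, fwdD y g (X + t))
      = (∫ t in (0:ℝ)..y, g (X + t + y)) - ∫ t in (0:ℝ)..y, g (X + t) := by
    rw [← intervalIntegral.integral_sub hint1 hint2]; rfl
  rw [h3]
  simp only [fwdD]
  congr 1
  calc (∫ t in (0:ℝ)..y, g (X + y + t)) = ∫ t in (0:ℝ)..y, g ((X + y) + t) := rfl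
    _ = ∫ t in (0:ℝ)..y, g (X + t + y) := by rw [e]

lemma fwdD_iter_integral {g : ℝ → E} (h : LII g) (y : ℝ) (k : ℕ) (X : ℝ) :
    (fwdD y)^[k] (fun x => ∫ t in (0:ℝ)..y, g (x + t)) X
      = ∫ t in (0:ℝ)..y, (fwdD y)^[k] g (X + t) := by
  induction k generalizing X with
  | zero => simp
  | succ k ih =>
    have hfg : (fwdD y)^[k] (fun x => ∫ t in (0:ℝ)..y, g (x + t))
        = fun X => ∫ t in (0:ℝ)..y, (fwdD y)^[k] g (X + t) := funext fun X => ih X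
    rw [Function.iterate_succ', Function.comp_apply, hfg,
      fwdD_integral (h.fwdDiff_iter y k) y X]
    simp only [Function.iterate_succ', Function.comp_apply]

lemma key {f : ℝ → E} (h : LII f) (y : ℝ) (k : ℕ) (X : ℝ) :
    (fwdD y)^[k + 1] (itI f (k + 1)) X = ∫ t in (0:ℝ)..y, (fwdD y)^[k] (itI f k) (X + t) := by
  rw [Function.iterate_succ, Function.comp_apply]
  have : fwdD y (itI f (k + 1)) = fun x => ∫ t in (0:ℝ)..y, itI f k (x + t) :=
    funext fun x => fwdD_itI_succ h y k x
  rw [this, fwdD_iter_integral (h.iter k) y k X]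

end Stmt12

namespace Stmt12

lemma LII_partial {E : Type*} [NormedAddCommGroup E] [NormedSpace ℝ E]
    [MeasurableSpace E] [BorelSpace E] [SecondCountableTopology E]
    (a : ℕ → E) : LII (fun x : ℝ => ∑ n ∈ Finset.Ico 1 ⌈x⌉₊, a n) := by
  intro b c
  rw [intervalIntegrable_iff]
  have hmeas : Measurable (fun x : ℝ => ∑ n ∈ Finset.Ico 1 ⌈x⌉₊, a n) := by
    have e : (fun x : ℝ => ∑ n ∈ Finset.Ico 1 ⌈x⌉₊, a n)
        = (fun m : ℕ => ∑ n ∈ Finset.Ico 1 m, a n) ∘ Nat.ceil := rfl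
    rw [e]
    exact measurable_from_nat.comp Nat.measurable_ceil
  have hconst : MeasureTheory.IntegrableOn
      (fun _ : ℝ => ∑ n ∈ Finset.Ico 1 ⌈max b c⌉₊, ‖a n‖) (Set.uIoc b c) := by
    refine (MeasureTheory.integrableOn_const_iff (hC := enorm_ne_top)).mpr (Or.inr ?_)
    rw [Set.uIoc]
    exact measure_Ioc_lt_top
  apply MeasureTheory.Integrable.mono' hconst
  · exact hmeas.aestronglyMeasurable.restrict
  · filter_upwards [MeasureTheory.ae_restrict_mem measurableSet_uIoc] with x hx
    calc ‖∑ n ∈ Finset.Ico 1 ⌈x⌉₊, a n‖ ≤ ∑ n ∈ Finset.Ico 1 ⌈x⌉₊, ‖a n‖ :=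
          norm_sum_le _ _
      _ ≤ ∑ n ∈ Finset.Ico 1 ⌈max b c⌉₊, ‖a n‖ := by
          apply Finset.sum_le_sum_of_subset_of_nonneg
          · exact Finset.Ico_subset_Ico le_rfl (Nat.ceil_le_ceil hx.2)
          · intro n _ _; exact norm_nonneg _

lemma partialSum_sub_eq {E : Type*} [NormedAddCommGroup E]
    (a : ℕ → E) {X Z : ℝ} (hXZ : X ≤ Z) :
    (∑ n ∈ Finset.Ico 1 ⌈Z⌉₊, a n) - ∑ n ∈ Finset.Ico 1 ⌈X⌉₊, a n
      = ∑ n ∈ Finset.Ico (max ⌈X⌉₊ 1) (max ⌈Z⌉₊ 1), a n := by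
  have e1 : ∀ w : ℝ, (∑ n ∈ Finset.Ico 1 ⌈w⌉₊, a n)
      = ∑ n ∈ Finset.Ico 1 (max ⌈w⌉₊ 1), a n := by
    intro w
    rcases Nat.eq_zero_or_pos ⌈w⌉₊ with h | h
    · simp [h]
    · rw [max_eq_left h]
  rw [e1 X, e1 Z, ← Finset.sum_Ico_consecutive a (le_max_right ⌈X⌉₊ 1)
    (max_le_max (Nat.ceil_le_ceil hXZ) le_rfl)]
  abel

lemma partialSum_bound (a : ℕ → ℂ) (ahat : ℕ → ℝ) (hle : ∀ n, ‖a n‖ ≤ ahat n)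
    {X Z : ℝ} (hXZ : X ≤ Z) :
    ‖partialSumC a Z - partialSumC a X‖ ≤ partialSumR ahat Z - partialSumR ahat X := by
  unfold partialSumC partialSumR
  rw [partialSum_sub_eq a hXZ, partialSum_sub_eq ahat hXZ]
  calc ‖∑ n ∈ Finset.Ico (max ⌈X⌉₊ 1) (max ⌈Z⌉₊ 1), a n‖
      ≤ ∑ n ∈ Finset.Ico (max ⌈X⌉₊ 1) (max ⌈Z⌉₊ 1), ‖a n‖ := norm_sum_le _ _
    _ ≤ ∑ n ∈ Finset.Ico (max ⌈X⌉₊ 1) (max ⌈Z⌉₊ 1), ahat n :=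
        Finset.sum_le_sum fun n _ => hle n

open MeasureTheory in
lemma main (a : ℕ → ℂ) (ahat : ℕ → ℝ) (hle : ∀ n, ‖a n‖ ≤ ahat n) (y : ℝ) (hy : 0 < y) :
    ∀ k : ℕ, ∀ X : ℝ,
    ‖(y ^ k)⁻¹ • (fwdD y)^[k] (itI (partialSumC a) k) X - partialSumC a X‖ ≤
      (y ^ k)⁻¹ • (fwdD y)^[k] (itI (partialSumR ahat) k) X - partialSumR ahat X := by
  intro k
  induction k with
  | zero => intro X; simp [itI]
  | succ k ih =>
    intro X
    have hC : LII (partialSumC a) := LII_partial a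
    have hR : LII (partialSumR ahat) := LII_partial ahat
    have hgC : LII ((fwdD y)^[k] (itI (partialSumC a) k)) := (hC.iter k).fwdDiff_iter y k
    have hgR : LII ((fwdD y)^[k] (itI (partialSumR ahat) k)) := (hR.iter k).fwdDiff_iter y k
    have hsmulC : IntervalIntegrable
        (fun t => (y ^ k)⁻¹ • (fwdD y)^[k] (itI (partialSumC a) k) (X + t)) volume 0 y :=
      (hgC.comp_add_left X 0 y).smul ((y ^ k)⁻¹)
    have hsmulR : IntervalIntegrable
        (fun t => (y ^ k)⁻¹ • (fwdD y)^[k] (itI (partialSumR ahat) k) (X + t)) volume 0 y :=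
      (hgR.comp_add_left X 0 y).smul ((y ^ k)⁻¹)
    have hintC : IntervalIntegrable
        (fun t => (y ^ k)⁻¹ • (fwdD y)^[k] (itI (partialSumC a) k) (X + t) - partialSumC a X)
        volume 0 y :=
      hsmulC.sub intervalIntegrable_const
    have hintR : IntervalIntegrable
        (fun t => (y ^ k)⁻¹ • (fwdD y)^[k] (itI (partialSumR ahat) k) (X + t) - partialSumR ahat X)
        volume 0 y :=
      hsmulR.sub intervalIntegrable_const
    have hsc : (y ^ (k + 1))⁻¹ = y⁻¹ * (y ^ k)⁻¹ := by
      rw [pow_succ, mul_inv, mul_comm]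
    have claim1 : (y ^ (k+1))⁻¹ • (fwdD y)^[k+1] (itI (partialSumC a) (k+1)) X - partialSumC a X
        = y⁻¹ • ∫ t in (0:ℝ)..y,
            ((y ^ k)⁻¹ • (fwdD y)^[k] (itI (partialSumC a) k) (X + t) - partialSumC a X) := by
      rw [intervalIntegral.integral_sub hsmulC
        intervalIntegrable_const, intervalIntegral.integral_smul,
        intervalIntegral.integral_const, key hC y k X, smul_sub, smul_smul, sub_zero,
        smul_smul, inv_mul_cancel₀ hy.ne', one_smul, hsc]
    have claim1R : (y ^ (k+1))⁻¹ • (fwdD y)^[k+1] (itI (partialSumR ahat) (k+1)) X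
          - partialSumR ahat X
        = y⁻¹ • ∫ t in (0:ℝ)..y,
            ((y ^ k)⁻¹ • (fwdD y)^[k] (itI (partialSumR ahat) k) (X + t) - partialSumR ahat X) := by
      rw [intervalIntegral.integral_sub hsmulR
        intervalIntegrable_const, intervalIntegral.integral_smul,
        intervalIntegral.integral_const, key hR y k X, smul_sub, smul_smul, sub_zero,
        smul_smul, inv_mul_cancel₀ hy.ne', one_smul, hsc]
    rw [claim1, claim1R, norm_smul, Real.norm_eq_abs, abs_of_pos (inv_pos.mpr hy),
      smul_eq_mul]
    refine mul_le_mul_of_nonneg_left ?_ (inv_pos.mpr hy).le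
    calc ‖∫ t in (0:ℝ)..y,
            ((y ^ k)⁻¹ • (fwdD y)^[k] (itI (partialSumC a) k) (X + t) - partialSumC a X)‖
        ≤ ∫ t in (0:ℝ)..y,
            ‖(y ^ k)⁻¹ • (fwdD y)^[k] (itI (partialSumC a) k) (X + t) - partialSumC a X‖ :=
          intervalIntegral.norm_integral_le_integral_norm hy.le
      _ ≤ ∫ t in (0:ℝ)..y,
            ((y ^ k)⁻¹ • (fwdD y)^[k] (itI (partialSumR ahat) k) (X + t) - partialSumR ahat X) := by
          apply intervalIntegral.integral_mono_on hy.le hintC.norm hintR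
          intro t ht
          have h1 := ih (X + t)
          have h2 := partialSum_bound a ahat hle (le_add_of_nonneg_right ht.1 : X ≤ X + t)
          calc ‖(y ^ k)⁻¹ • (fwdD y)^[k] (itI (partialSumC a) k) (X + t) - partialSumC a X‖
              = ‖((y ^ k)⁻¹ • (fwdD y)^[k] (itI (partialSumC a) k) (X + t) - partialSumC a (X + t))
                  + (partialSumC a (X + t) - partialSumC a X)‖ := by congr 1; abel
            _ ≤ ‖(y ^ k)⁻¹ • (fwdD y)^[k] (itI (partialSumC a) k) (X + t) - partialSumC a (X + t)‖
                  + ‖partialSumC a (X + t) - partialSumC a X‖ := norm_add_le _ _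
            _ ≤ ((y ^ k)⁻¹ • (fwdD y)^[k] (itI (partialSumR ahat) k) (X + t)
                  - partialSumR ahat (X + t))
                  + (partialSumR ahat (X + t) - partialSumR ahat X) := add_le_add h1 h2
            _ = (y ^ k)⁻¹ • (fwdD y)^[k] (itI (partialSumR ahat) k) (X + t)
                  - partialSumR ahat X := by abel

end Stmt12

theorem statement12 (a : ℕ → ℂ) (ahat : ℕ → ℝ) (hle : ∀ n : ℕ, ‖a n‖ ≤ ahat n)
    (k : ℕ) (hk : 1 ≤ k) (y : ℝ) (hy : 0 < y) (X : ℝ) :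
    ‖((y ^ k)⁻¹ : ℂ) * (fwdDiffC y)^[k] (iterIntC (partialSumC a) k) X - partialSumC a X‖ ≤
      (y ^ k)⁻¹ * (fwdDiffR y)^[k] (iterIntR (partialSumR ahat) k) X - partialSumR ahat X := by
  have h := Stmt12.main a ahat hle y hy k X
  simpa [Stmt12.fwdDiffC_eq, Stmt12.fwdDiffR_eq, Stmt12.iterIntC_eq, Stmt12.iterIntR_eq,
    Complex.real_smul, smul_eq_mul] using h

end
end

section
/- (Inclusion–exclusion for Euler products over a lattice.) Let P be a finite lattice with least element ⊥ and Möbius function μ_P. Let f : P × ℕ → ℝ be a function with f(y,n) ≥ 0 for all y and n, and fix x ∈ P such that the Euler product ∏_p (1 + ∑_{y ≤ x} f(y,p)) over all primes p converges. Then ∑_{z ≤ x} μ_P(z,x) · ∏_p (1 + ∑_{y ≤ z} f(y,p)) = (∑_{z ≤ x} μ_P(z,x)) + ∑_{n ≥ 2 squarefree} ∑_{(y_p)_{p ∣ n} ∈ P^{\{p : p ∣ n\}}, ⋁_{p ∣ n} y_p = x} ∏_{p ∣ n} f(y_p, p), where the right-hand double sum converges. In particular, the left-hand side is positive if and only if x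 = ⊥ or there exists a squarefree n ≥ 2 and a tuple (y_p)_{p ∣ n} with ⋁_{p∣n} y_p = x and ∏_{p ∣ n} f(y_p,p) > 0. -/
open scoped Classical

noncomputable section

set_option maxHeartbeats 1000000

namespace Statement13Aux

open Finset

variable (S : ℕ → ℝ)

def F (n : ℕ) : ℝ := if Squarefree n then ∏ p ∈ n.primeFactors, S p else 0

lemma F_nonneg (hS : ∀ p, 0 ≤ S p) (n : ℕ) : 0 ≤ F S n := by
  unfold F; split
  · exact Finset.prod_nonneg fun p _ => hS p
  · exact le_refl 0

lemma F_one : F S 1 = 1 := by simp [F, squarefree_one]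

lemma F_zero : F S 0 = 0 := by simp [F, not_squarefree_zero]

lemma F_mul {m n : ℕ} (h : m.Coprime n) : F S (m * n) = F S m * F S n := by
  rcases eq_or_ne m 0 with rfl | hm
  · rw [Nat.coprime_zero_left] at h; subst h; simp [F_zero, F_one]
  rcases eq_or_ne n 0 with rfl | hn
  · rw [Nat.coprime_zero_right] at h; subst h; simp [F_zero, F_one]
  unfold F
  by_cases hsf : Squarefree m ∧ Squarefree n
  · rw [if_pos ((Nat.squarefree_mul h).mpr hsf), if_pos hsf.1, if_pos hsf.2,
      Nat.primeFactors_mul hm hn, Finset.prod_union h.disjoint_primeFactors]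
  · rw [if_neg (fun hc => hsf ((Nat.squarefree_mul h).mp hc))]
    rcases (not_and_or.mp hsf) with h' | h'
    · rw [if_neg h', zero_mul]
    · rw [if_neg h', mul_zero]

lemma prod_le_tprod_real {ι : Type*} [DecidableEq ι] {g : ι → ℝ} (hg : ∀ i, 1 ≤ g i)
    (h : Multipliable g) (B : Finset ι) : ∏ i ∈ B, g i ≤ ∏' i, g i := by
  refine ge_of_tendsto h.hasProd (Filter.eventually_atTop.mpr ⟨B, fun s hs => ?_⟩)
  rw [← Finset.prod_sdiff hs]
  have h1 : (1 : ℝ) ≤ ∏ i ∈ s \ B, g i := by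
    rw [← Finset.prod_const_one (s := s \ B)]
    exact Finset.prod_le_prod (fun i _ => zero_le_one) (fun i _ => hg i)
  calc ∏ i ∈ B, g i = 1 * ∏ i ∈ B, g i := (one_mul _).symm
    _ ≤ (∏ i ∈ s \ B, g i) * ∏ i ∈ B, g i :=
      mul_le_mul_of_nonneg_right h1 (Finset.prod_nonneg fun i _ => le_trans zero_le_one (hg i))

lemma sum_F_le (hS : ∀ p, 0 ≤ S p)
    (hconv : Multipliable fun p : Nat.Primes => 1 + S (p : ℕ)) (A : Finset ℕ) :
    ∑ n ∈ A, F S n ≤ ∏' p : Nat.Primes, (1 + S (p : ℕ)) := by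
  classical
  set B : Finset ℕ := (A.filter Squarefree).biUnion Nat.primeFactors with hB
  have hBp : ∀ q ∈ B, Nat.Prime q := by
    intro q hq
    simp only [hB, mem_biUnion] at hq
    obtain ⟨n, -, hq⟩ := hq
    exact Nat.prime_of_mem_primeFactors hq
  have h1 : ∑ n ∈ A, F S n = ∑ n ∈ A.filter Squarefree, ∏ p ∈ n.primeFactors, S p := by
    rw [Finset.sum_filter]; rfl
  have h2 : ∑ n ∈ A.filter Squarefree, ∏ p ∈ n.primeFactors, S p
      = ∑ t ∈ (A.filter Squarefree).image Nat.primeFactors, ∏ p ∈ t, S p := by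
    rw [Finset.sum_image]
    intro a ha b hb hab
    have ha' := (Finset.mem_filter.mp ha).2
    have hb' := (Finset.mem_filter.mp hb).2
    rw [← Nat.prod_primeFactors_of_squarefree ha', ← Nat.prod_primeFactors_of_squarefree hb', hab]
  have h3 : ((A.filter Squarefree).image Nat.primeFactors) ⊆ B.powerset := by
    intro t ht
    simp only [Finset.mem_image] at ht
    obtain ⟨n, hn, rfl⟩ := ht
    exact Finset.mem_powerset.mpr (Finset.subset_biUnion_of_mem _ hn)
  have h4 : ∑ t ∈ (A.filter Squarefree).image Nat.primeFactors, ∏ p ∈ t, S p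
      ≤ ∑ t ∈ B.powerset, ∏ p ∈ t, S p :=
    Finset.sum_le_sum_of_subset_of_nonneg h3 fun t _ _ => Finset.prod_nonneg fun p _ => hS p
  have h5 : ∑ t ∈ B.powerset, ∏ p ∈ t, S p = ∏ p ∈ B, (S p + 1) := by
    rw [Finset.prod_add]; simp
  have h6 : ∏ p ∈ B, (S p + 1)
      = ∏ q ∈ B.attach.image (fun q => (⟨q.1, hBp q.1 q.2⟩ : Nat.Primes)), (1 + S (q : ℕ)) := by
    rw [Finset.prod_image (by
      intro a _ b _ h
      exact Subtype.ext (congrArg (fun t : Nat.Primes => (t : ℕ)) h))]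
    rw [← Finset.prod_attach B (fun p => S p + 1)]
    exact Finset.prod_congr rfl fun q _ => by ring
  calc ∑ n ∈ A, F S n ≤ ∑ t ∈ B.powerset, ∏ p ∈ t, S p := by rw [h1, h2]; exact h4
    _ = ∏ q ∈ B.attach.image (fun q => (⟨q.1, hBp q.1 q.2⟩ : Nat.Primes)), (1 + S (q : ℕ)) := by
        rw [h5, h6]
    _ ≤ _ := prod_le_tprod_real (fun q => by linarith [hS (q : ℕ)]) hconv _

lemma summable_F (hS : ∀ p, 0 ≤ S p)
    (hconv : Multipliable fun p : Nat.Primes => 1 + S (p : ℕ)) : Summable (F S) :=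
  summable_of_sum_le (fun n => F_nonneg S hS n) (sum_F_le S hS hconv)

lemma euler (hS : ∀ p, 0 ≤ S p) (hsum : Summable (F S)) :
    HasProd (fun p : Nat.Primes => 1 + S (p : ℕ)) (∑' n, F S n) := by
  have hnorm : Summable (fun n => ‖F S n‖) := by
    simpa only [Real.norm_of_nonneg (F_nonneg S hS _)] using hsum
  have H := EulerProduct.eulerProduct_hasProd (f := F S) (F_one S)
    (fun {m n} h => F_mul S h) hnorm (F_zero S)
  have key : ∀ p : Nat.Primes, (∑' e : ℕ, F S ((p : ℕ) ^ e)) = 1 + S (p : ℕ) := by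
    intro p
    rw [tsum_eq_sum (s := ({0, 1} : Finset ℕ)) ?_]
    · rw [Finset.sum_insert (by simp), Finset.sum_singleton]
      simp [pow_zero, pow_one, F_one, F, p.2.squarefree, p.2.primeFactors]
    · intro e he
      simp only [Finset.mem_insert, Finset.mem_singleton, not_or] at he
      have : ¬ Squarefree ((p : ℕ) ^ e) := by
        rw [Nat.squarefree_pow_iff p.2.ne_one he.1]
        exact fun hc => he.2 hc.2
      simp [F, this]
  simpa only [key] using H

end Statement13Aux


namespace Statement13Aux

lemma mobius_step {P : Type} [Lattice P] [OrderBot P] [Fintype P]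
    (μ : P → P → ℤ)
    (hμ : ∀ y x : P, y ≤ x →
      (∑ z ∈ Finset.univ.filter (fun z : P => y ≤ z ∧ z ≤ x), μ z x) =
        if y = x then 1 else 0)
    (x : P) {ι : Type} [Fintype ι] [DecidableEq ι] (t : (ι → P) → ℝ) :
    (∑ z ∈ Finset.univ.filter (fun z : P => z ≤ x), (μ z x : ℝ) *
      ∑ c ∈ (Finset.univ : Finset (ι → P)).filter (fun c => ∀ p, c p ≤ z), t c)
      = ∑ c ∈ (Finset.univ : Finset (ι → P)).filter (fun c => Finset.univ.sup c = x), t c := by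
  classical
  have key : ∀ c : ι → P,
      (∑ z ∈ Finset.univ.filter (fun z : P => z ≤ x),
        (μ z x : ℝ) * (if ∀ p, c p ≤ z then t c else 0))
      = if Finset.univ.sup c = x then t c else 0 := by
    intro c
    have hcond : ∀ z : P, (∀ p, c p ≤ z) ↔ Finset.univ.sup c ≤ z := by
      intro z; rw [Finset.sup_le_iff]; simp
    have e1 : ∀ z : P, (μ z x : ℝ) * (if ∀ p, c p ≤ z then t c else 0)
        = if Finset.univ.sup c ≤ z then (μ z x : ℝ) * t c else 0 := by
      intro z; rw [← hcond z]; split <;> simp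
    have hfil : Finset.univ.filter (fun z : P => Finset.univ.sup c ≤ z ∧ z ≤ x)
        = (Finset.univ.filter (fun z : P => z ≤ x)).filter
            (fun z => Finset.univ.sup c ≤ z) := by
      rw [Finset.filter_filter]
      exact Finset.filter_congr fun z _ => by tauto
    have step1 : (∑ z ∈ Finset.univ.filter (fun z : P => z ≤ x),
        (μ z x : ℝ) * (if ∀ p, c p ≤ z then t c else 0))
        = (∑ z ∈ Finset.univ.filter (fun z : P => Finset.univ.sup c ≤ z ∧ z ≤ x),
            (μ z x : ℝ)) * t c := by
      calc (∑ z ∈ Finset.univ.filter (fun z : P => z ≤ x),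
          (μ z x : ℝ) * (if ∀ p, c p ≤ z then t c else 0))
          = ∑ z ∈ Finset.univ.filter (fun z : P => z ≤ x),
              (if Finset.univ.sup c ≤ z then (μ z x : ℝ) * t c else 0) :=
            Finset.sum_congr rfl fun z _ => e1 z
        _ = ∑ z ∈ (Finset.univ.filter (fun z : P => z ≤ x)).filter
              (fun z => Finset.univ.sup c ≤ z), (μ z x : ℝ) * t c :=
            (Finset.sum_filter _ _).symm
        _ = ∑ z ∈ Finset.univ.filter (fun z : P => Finset.univ.sup c ≤ z ∧ z ≤ x),
              (μ z x : ℝ) * t c := by rw [hfil]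
        _ = _ := (Finset.sum_mul _ _ _).symm
    rw [step1]
    by_cases hsx : Finset.univ.sup c ≤ x
    · have h0 := hμ (Finset.univ.sup c) x hsx
      have h0' : (∑ z ∈ Finset.univ.filter
            (fun z : P => Finset.univ.sup c ≤ z ∧ z ≤ x), (μ z x : ℝ))
          = if Finset.univ.sup c = x then 1 else 0 := by
        rw [← Int.cast_sum, h0]
        split <;> simp
      rw [h0']
      split <;> simp
    · have hempty : Finset.univ.filter (fun z : P => Finset.univ.sup c ≤ z ∧ z ≤ x) = ∅ :=
        Finset.filter_eq_empty_iff.mpr fun z _ h => hsx (h.1.trans h.2)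
      rw [hempty, Finset.sum_empty, zero_mul,
        if_neg (fun h => hsx (le_of_eq h))]
  calc (∑ z ∈ Finset.univ.filter (fun z : P => z ≤ x), (μ z x : ℝ) *
      ∑ c ∈ (Finset.univ : Finset (ι → P)).filter (fun c => ∀ p, c p ≤ z), t c)
      = ∑ z ∈ Finset.univ.filter (fun z : P => z ≤ x),
          ∑ c ∈ (Finset.univ : Finset (ι → P)),
            (μ z x : ℝ) * (if ∀ p, c p ≤ z then t c else 0) := by
        refine Finset.sum_congr rfl fun z _ => ?_
        rw [← Finset.mul_sum, ← Finset.sum_filter]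
    _ = ∑ c ∈ (Finset.univ : Finset (ι → P)),
          ∑ z ∈ Finset.univ.filter (fun z : P => z ≤ x),
            (μ z x : ℝ) * (if ∀ p, c p ≤ z then t c else 0) := Finset.sum_comm
    _ = ∑ c ∈ (Finset.univ : Finset (ι → P)),
          (if Finset.univ.sup c = x then t c else 0) :=
        Finset.sum_congr rfl fun c _ => key c
    _ = _ := (Finset.sum_filter _ _).symm

end Statement13Aux

open Statement13Aux in
theorem statement13 (P : Type) [Lattice P] [OrderBot P] [Fintype P]
    -- `μ` is the Möbius function of the lattice `P`
    (μ : P → P → ℤ)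
    (hμ : ∀ y x : P, y ≤ x →
      (∑ z ∈ Finset.univ.filter (fun z : P => y ≤ z ∧ z ≤ x), μ z x) =
        if y = x then 1 else 0)
    -- nonnegative weights
    (f : P → ℕ → ℝ) (hf : ∀ y n, 0 ≤ f y n)
    (x : P)
    -- convergence of the Euler product `∏_p (1 + ∑_{y ≤ x} f(y, p))`
    (hconv : Multipliable fun p : Nat.Primes =>
      1 + ∑ y ∈ Finset.univ.filter (fun y : P => y ≤ x), f y (p : ℕ)) :
    -- the right-hand double series converges
    (Summable fun n : ℕ =>
      if 2 ≤ n ∧ Squarefree n then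
        ∑ c ∈ (Finset.univ : Finset (n.primeFactors → P)).filter
            (fun c => Finset.univ.sup c = x),
          ∏ p : n.primeFactors, f (c p) (p : ℕ)
      else 0) ∧
    -- the inclusion–exclusion identity
    ((∑ z ∈ Finset.univ.filter (fun z : P => z ≤ x), (μ z x : ℝ) *
        ∏' p : Nat.Primes, (1 + ∑ y ∈ Finset.univ.filter (fun y : P => y ≤ z), f y (p : ℕ))) =
      (∑ z ∈ Finset.univ.filter (fun z : P => z ≤ x), (μ z x : ℝ)) +
        ∑' n : ℕ,
          (if 2 ≤ n ∧ Squarefree n then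
            ∑ c ∈ (Finset.univ : Finset (n.primeFactors → P)).filter
                (fun c => Finset.univ.sup c = x),
              ∏ p : n.primeFactors, f (c p) (p : ℕ)
          else 0)) ∧
    -- positivity criterion
    ((0 < ∑ z ∈ Finset.univ.filter (fun z : P => z ≤ x), (μ z x : ℝ) *
        ∏' p : Nat.Primes, (1 + ∑ y ∈ Finset.univ.filter (fun y : P => y ≤ z), f y (p : ℕ))) ↔
      (x = ⊥ ∨ ∃ n : ℕ, 2 ≤ n ∧ Squarefree n ∧ ∃ c : n.primeFactors → P,
        Finset.univ.sup c = x ∧ 0 < ∏ p : n.primeFactors, f (c p) (p : ℕ))) := by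
  classical
  -- notation
  set S : P → ℕ → ℝ := fun z p => ∑ y ∈ Finset.univ.filter (fun y : P => y ≤ z), f y p with hSdef
  set R : ℕ → ℝ := fun n =>
    if 2 ≤ n ∧ Squarefree n then
      ∑ c ∈ (Finset.univ : Finset (n.primeFactors → P)).filter
          (fun c => Finset.univ.sup c = x),
        ∏ p : n.primeFactors, f (c p) (p : ℕ)
    else 0 with hRdef
  have hSnn : ∀ z p, 0 ≤ S z p := fun z p => Finset.sum_nonneg fun y _ => hf y p
  have hSmono : ∀ z, z ≤ x → ∀ p, S z p ≤ S x p := by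
    intro z hz p
    apply Finset.sum_le_sum_of_subset_of_nonneg
    · intro y hy
      simp only [Finset.mem_filter, Finset.mem_univ, true_and] at hy ⊢
      exact hy.trans hz
    · intro y _ _; exact hf y p
  have hsum_x : Summable (F (S x)) := summable_F _ (hSnn x) hconv
  have hsum : ∀ z, z ≤ x → Summable (F (S z)) := by
    intro z hz
    refine hsum_x.of_nonneg_of_le (fun n => F_nonneg _ (hSnn z) n) ?_
    intro n
    unfold F
    by_cases hsf : Squarefree n
    · rw [if_pos hsf, if_pos hsf]
      exact Finset.prod_le_prod (fun p _ => hSnn z p) (fun p _ => hSmono z hz p)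
    · rw [if_neg hsf, if_neg hsf]
  have htp : ∀ z, z ≤ x →
      (∏' p : Nat.Primes,
        (1 + ∑ y ∈ Finset.univ.filter (fun y : P => y ≤ z), f y (p : ℕ)))
      = ∑' n, F (S z) n := by
    intro z hz
    exact (euler _ (hSnn z) (hsum z hz)).tprod_eq
  -- rewrite `F (S z)` in terms of tuples
  have FG : ∀ z (n : ℕ), F (S z) n =
      if Squarefree n then
        ∑ c ∈ (Finset.univ : Finset (n.primeFactors → P)).filter
            (fun c => ∀ p, c p ≤ z),
          ∏ p : n.primeFactors, f (c p) (p : ℕ)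
      else 0 := by
    intro z n
    unfold F
    by_cases hsf : Squarefree n
    · rw [if_pos hsf, if_pos hsf]
      rw [← Finset.prod_coe_sort n.primeFactors (fun p => S z p)]
      rw [show (fun p : n.primeFactors => S z (p : ℕ))
          = fun p : n.primeFactors => ∑ y ∈ Finset.univ.filter (fun y : P => y ≤ z),
              f y (p : ℕ) from rfl]
      rw [Finset.prod_univ_sum (fun _ : n.primeFactors => Finset.univ.filter
        (fun y : P => y ≤ z)) (fun p y => f y (p : ℕ))]
      refine Finset.sum_congr ?_ fun c _ => rfl
      ext c
      simp [Fintype.mem_piFinset]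
    · rw [if_neg hsf, if_neg hsf]
  -- the combined coefficient function
  set W : ℕ → ℝ := fun n => ∑ z ∈ Finset.univ.filter (fun z : P => z ≤ x),
    (μ z x : ℝ) * F (S z) n with hWdef
  have hWsum : Summable W := by
    apply summable_sum
    intro z hz
    exact ((hsum z (Finset.mem_filter.mp hz).2).mul_left _)
  have hW1 : W 1 = ∑ z ∈ Finset.univ.filter (fun z : P => z ≤ x), (μ z x : ℝ) := by
    rw [hWdef]
    exact Finset.sum_congr rfl fun z _ => by rw [F_one, mul_one]
  have hWn : ∀ n : ℕ, n ≠ 1 → W n = R n := by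
    intro n hn1
    by_cases hc : 2 ≤ n ∧ Squarefree n
    · rw [hWdef, hRdef]
      simp only
      rw [if_pos hc]
      calc (∑ z ∈ Finset.univ.filter (fun z : P => z ≤ x), (μ z x : ℝ) * F (S z) n)
          = ∑ z ∈ Finset.univ.filter (fun z : P => z ≤ x), (μ z x : ℝ) *
              ∑ c ∈ (Finset.univ : Finset (n.primeFactors → P)).filter
                (fun c => ∀ p, c p ≤ z), ∏ p : n.primeFactors, f (c p) (p : ℕ) := by
            refine Finset.sum_congr rfl fun z _ => ?_
            rw [FG z n, if_pos hc.2]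
        _ = _ := mobius_step (ι := n.primeFactors) μ hμ x
              (fun c => ∏ p : n.primeFactors, f (c p) (p : ℕ))
    · have hzero : ∀ z : P, F (S z) n = 0 := by
        intro z
        rw [FG z n]
        have hnsf : ¬ Squarefree n := by
          intro hsf
          apply hc
          refine ⟨?_, hsf⟩
          rcases Nat.lt_or_ge n 2 with h | h
          · interval_cases n
            · exact absurd hsf not_squarefree_zero
            · exact absurd rfl hn1
          · exact h
        rw [if_neg hnsf]
      rw [hWdef, hRdef]
      simp only
      rw [if_neg hc]
      calc (∑ z ∈ Finset.univ.filter (fun z : P => z ≤ x), (μ z x : ℝ) * F (S z) n)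
          = ∑ z ∈ Finset.univ.filter (fun z : P => z ≤ x), 0 := by
            refine Finset.sum_congr rfl fun z _ => by rw [hzero z, mul_zero]
        _ = 0 := Finset.sum_const_zero
  have hRW : R = fun n => if n = 1 then 0 else W n := by
    funext n
    by_cases hn : n = 1
    · subst hn
      rw [if_pos rfl, hRdef]
      simp
    · rw [if_neg hn, hWn n hn]
  -- summability of `R`
  have hRsum : Summable R := by
    rw [hRW]
    apply hWsum.summable_of_eq_zero_or_self
    intro n
    by_cases hn : n = 1
    · subst hn; left; rw [if_pos rfl]
    · right; rw [if_neg hn]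
  -- the identity
  have hid : (∑ z ∈ Finset.univ.filter (fun z : P => z ≤ x), (μ z x : ℝ) *
        ∏' p : Nat.Primes, (1 + ∑ y ∈ Finset.univ.filter (fun y : P => y ≤ z), f y (p : ℕ))) =
      (∑ z ∈ Finset.univ.filter (fun z : P => z ≤ x), (μ z x : ℝ)) + ∑' n, R n := by
    calc (∑ z ∈ Finset.univ.filter (fun z : P => z ≤ x), (μ z x : ℝ) *
        ∏' p : Nat.Primes, (1 + ∑ y ∈ Finset.univ.filter (fun y : P => y ≤ z), f y (p : ℕ)))
        = ∑ z ∈ Finset.univ.filter (fun z : P => z ≤ x), (μ z x : ℝ) * ∑' n, F (S z) n := by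
          refine Finset.sum_congr rfl fun z hz => ?_
          rw [htp z (Finset.mem_filter.mp hz).2]
      _ = ∑ z ∈ Finset.univ.filter (fun z : P => z ≤ x), ∑' n, (μ z x : ℝ) * F (S z) n := by
          refine Finset.sum_congr rfl fun z hz => ?_
          rw [tsum_mul_left]
      _ = ∑' n, W n := by
          rw [hWdef]
          exact (Summable.tsum_finsetSum fun z hz => (hsum z (Finset.mem_filter.mp hz).2).mul_left _).symm
      _ = W 1 + ∑' n, (if n = 1 then 0 else W n) := Summable.tsum_eq_add_tsum_ite hWsum 1
      _ = _ := by rw [hW1, ← hRW]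
  -- value of the Möbius sum
  have hM : (∑ z ∈ Finset.univ.filter (fun z : P => z ≤ x), (μ z x : ℝ))
      = if x = ⊥ then 1 else 0 := by
    have h0 := hμ ⊥ x bot_le
    have hfil : Finset.univ.filter (fun z : P => ⊥ ≤ z ∧ z ≤ x)
        = Finset.univ.filter (fun z : P => z ≤ x) := by
      ext z; simp
    rw [hfil] at h0
    rw [← Int.cast_sum, h0]
    by_cases hbx : x = ⊥
    · rw [if_pos hbx.symm, if_pos hbx]; norm_num
    · rw [if_neg (fun h => hbx h.symm), if_neg hbx]; norm_num
  have hRnn : ∀ n, 0 ≤ R n := by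
    intro n
    rw [hRdef]
    simp only
    split
    · exact Finset.sum_nonneg fun c _ => Finset.prod_nonneg fun p _ => hf _ _
    · exact le_refl 0
  refine ⟨hRsum, hid, ?_⟩
  constructor
  · intro hpos
    by_cases hx : x = ⊥
    · exact Or.inl hx
    right
    by_contra hno
    push_neg at hno
    have hR0 : ∀ n, R n = 0 := by
      intro n
      rw [hRdef]
      simp only
      split
      case isTrue hcnd =>
        refine Finset.sum_eq_zero fun c hc => ?_
        have h1 := hno n hcnd.1 hcnd.2 c (Finset.mem_filter.mp hc).2
        have h2 : 0 ≤ ∏ p : n.primeFactors, f (c p) (p : ℕ) :=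
          Finset.prod_nonneg fun p _ => hf _ _
        linarith
      case isFalse => rfl
    rw [hid, hM, if_neg hx] at hpos
    have : (∑' n, R n) = 0 := by
      rw [show R = fun _ => (0 : ℝ) from funext hR0]
      exact tsum_zero
    rw [this] at hpos
    norm_num at hpos
  · rintro (rfl | ⟨n, hn2, hsf, c, hcx, hcpos⟩)
    · rw [hid, hM, if_pos rfl]
      have := tsum_nonneg (L := SummationFilter.unconditional ℕ) hRnn
      linarith
    · rw [hid, hM]
      have h1 : (∏ p : n.primeFactors, f (c p) (p : ℕ)) ≤ R n := by
        rw [hRdef]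
        simp only
        rw [if_pos ⟨hn2, hsf⟩]
        refine Finset.single_le_sum
          (f := fun d : n.primeFactors → P => ∏ p : n.primeFactors, f (d p) (p : ℕ))
          (fun d _ => Finset.prod_nonneg fun p _ => hf _ _) ?_
        exact Finset.mem_filter.mpr ⟨Finset.mem_univ c, hcx⟩
      have h2 : R n ≤ ∑' m, R m := Summable.le_tsum hRsum n fun j _ => hRnn j
      have h3 : (0:ℝ) ≤ if x = ⊥ then 1 else 0 := by split <;> norm_num
      linarith

end
end
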